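/- All entries of the inverse of the Cartan matrix of an irreducible crystallographic root system are nonnegative (indeed positive). -/

import Mathlib

open scoped RealInnerProductSpace BigOperators

noncomputable section

abbrev V (n : ℕ) := EuclideanSpace ℝ (Fin n)

/-- The coroot `α^∨ = 2α/(α,α)`. -/
noncomputable def covec {n : ℕ} (α : V n) : V n := (2 / ⟪α, α⟫) • α

/-- `Φ` is an irreducible crystallographic root system in `ℝⁿ`. -/
structure IsCrystRS {n : ℕ} (Φ : Finset (V n)) : Prop where
  ne_zero : ∀ α ∈ Φ, α ≠ 0
  span_top : Submodule.span ℝ (Φ : Set (V n)) = ⊤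
  neg_mem : ∀ α ∈ Φ, -α ∈ Φ
  refl_mem : ∀ α ∈ Φ, ∀ β ∈ Φ, β - ⟪β, covec α⟫ • α ∈ Φ
  cryst : ∀ α ∈ Φ, ∀ β ∈ Φ, ∃ m : ℤ, ⟪β, covec α⟫ = (m : ℝ)
  irreducible : ∀ s ⊆ (Φ : Set (V n)),
    (∀ α ∈ s, ∀ β ∈ (Φ : Set (V n)) \ s, ⟪α, β⟫ = 0) → s = ∅ ∨ s = (Φ : Set (V n))

/-- `Δ` is a simple system for the root system `Φ`. -/
structure IsSimpleSys {n : ℕ} (Φ Δ : Finset (V n)) : Prop where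
  subset : Δ ⊆ Φ
  indep : LinearIndependent ℝ (fun a : (Δ : Set (V n)) => (a : V n))
  decomp : ∀ α ∈ Φ,
    (∃ c : V n → ℝ, (∀ d ∈ Δ, 0 ≤ c d) ∧ α = ∑ d ∈ Δ, c d • d) ∨
    (∃ c : V n → ℝ, (∀ d ∈ Δ, 0 ≤ c d) ∧ α = -∑ d ∈ Δ, c d • d)

/-- `α` is a positive root w.r.t. the simple system `Δ`. -/
def IsPosRoot {n : ℕ} (Δ : Finset (V n)) (α : V n) : Prop :=
  ∃ c : V n → ℝ, (∀ d ∈ Δ, 0 ≤ c d) ∧ α = ∑ d ∈ Δ, c d • d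

/-- The affine Weyl group `W_a`, generated by all affine reflections
`s_{α,k}(x) = x - (⟨x,α^∨⟩ - k)α`, as a subgroup of the isometry group of `ℝⁿ`. -/
noncomputable def affineWeyl {n : ℕ} (Φ : Finset (V n)) : Subgroup (V n ≃ᵢ V n) :=
  Subgroup.closure {f | ∃ α ∈ Φ, ∃ k : ℤ, ∀ x, f x = x - (⟪x, covec α⟫ - (k : ℝ)) • α}

/-- The finite Weyl group `W`, generated by the linear reflections `s_{α,0}`. -/
noncomputable def finiteWeyl {n : ℕ} (Φ : Finset (V n)) : Subgroup (V n ≃ᵢ V n) :=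
  Subgroup.closure {f | ∃ α ∈ Φ, ∀ x, f x = x - ⟪x, covec α⟫ • α}

instance isomAction {n : ℕ} : MulAction (V n ≃ᵢ V n) (V n) where
  smul f x := f x
  one_smul _ := rfl
  mul_smul _ _ _ := rfl

set_option linter.unusedSectionVars false
namespace Aux

variable {n N : ℕ} [DecidableEq (V n)] {Φ Δ : Finset (V n)} {b : Fin N → V n}

lemma inner_self_pos' {x : V n} (hx : x ≠ 0) : 0 < ⟪x, x⟫ :=
  lt_of_le_of_ne real_inner_self_nonneg (fun h => hx (inner_self_eq_zero.1 h.symm))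

lemma inner_covec_right (α β : V n) : ⟪β, covec α⟫ = 2 / ⟪α, α⟫ * ⟪β, α⟫ :=
  real_inner_smul_right _ _ _

lemma inner_covec_left (α β : V n) : ⟪covec α, β⟫ = 2 / ⟪α, α⟫ * ⟪α, β⟫ :=
  real_inner_smul_left _ _ _

lemma b_mem_Δ (hbΔ : Finset.image b Finset.univ = Δ) (i : Fin N) : b i ∈ Δ := by
  rw [← hbΔ]; exact Finset.mem_image_of_mem b (Finset.mem_univ i)

lemma b_mem_Φ (hΔ : IsSimpleSys Φ Δ) (hbΔ : Finset.image b Finset.univ = Δ) (i : Fin N) :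
    b i ∈ Φ := hΔ.subset (b_mem_Δ hbΔ i)

lemma indep_b (hΔ : IsSimpleSys Φ Δ) (hbinj : Function.Injective b)
    (hbΔ : Finset.image b Finset.univ = Δ) : LinearIndependent ℝ b := by
  have h := hΔ.indep.comp
    (fun i : Fin N => (⟨b i, by exact_mod_cast b_mem_Δ hbΔ i⟩ : (Δ : Set (V n))))
    (fun i j hij => hbinj (congrArg Subtype.val hij))
  exact h

lemma coeff_zero (hind : LinearIndependent ℝ b) {a : Fin N → ℝ}
    (h : ∑ i, a i • b i = 0) : ∀ i, a i = 0 :=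
  Fintype.linearIndependent_iff.1 hind a h

lemma coeff_unique (hind : LinearIndependent ℝ b) {a c : Fin N → ℝ}
    (h : ∑ i, a i • b i = ∑ i, c i • b i) : ∀ i, a i = c i := by
  intro i
  have h0 : ∑ i, (a i - c i) • b i = 0 := by
    simp only [sub_smul, Finset.sum_sub_distrib, h, sub_self]
  have := coeff_zero hind h0 i
  linarith

lemma coeff_zero_on (hind : LinearIndependent ℝ b) {S : Finset (Fin N)} {a : Fin N → ℝ}
    (h : ∑ i ∈ S, a i • b i = 0) : ∀ i ∈ S, a i = 0 := by
  classical
  intro i hi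
  have h' : ∑ k, (if k ∈ S then a k else 0) • b k = 0 := by
    simp only [ite_smul, zero_smul, Finset.sum_ite_mem, Finset.univ_inter]; exact h
  have := coeff_zero hind h' i
  simpa [hi] using this

lemma sum_conv {M : Type*} [AddCommMonoid M] (hbinj : Function.Injective b)
    (hbΔ : Finset.image b Finset.univ = Δ) (F : V n → M) :
    ∑ d ∈ Δ, F d = ∑ i, F (b i) := by
  rw [← hbΔ]
  exact Finset.sum_image (fun x _ y _ h => hbinj h)

lemma decomp' (hΔ : IsSimpleSys Φ Δ) (hbinj : Function.Injective b)
    (hbΔ : Finset.image b Finset.univ = Δ) {α : V n} (hα : α ∈ Φ) :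
    (∃ c : Fin N → ℝ, (∀ i, 0 ≤ c i) ∧ α = ∑ i, c i • b i) ∨
    (∃ c : Fin N → ℝ, (∀ i, 0 ≤ c i) ∧ α = -∑ i, c i • b i) := by
  rcases hΔ.decomp α hα with ⟨c, hc, he⟩ | ⟨c, hc, he⟩
  · exact Or.inl ⟨fun i => c (b i), fun i => hc (b i) (b_mem_Δ hbΔ i),
      by rw [he, sum_conv hbinj hbΔ (fun d => c d • d)]⟩
  · exact Or.inr ⟨fun i => c (b i), fun i => hc (b i) (b_mem_Δ hbΔ i),
      by rw [he, sum_conv hbinj hbΔ (fun d => c d • d)]⟩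

lemma no_mixed (hΔ : IsSimpleSys Φ Δ) (hbinj : Function.Injective b)
    (hbΔ : Finset.image b Finset.univ = Δ) {g : Fin N → ℝ}
    (hmem : ∑ i, g i • b i ∈ Φ) (hneg : ∃ i, g i < 0) (hpos : ∃ k, 0 < g k) : False := by
  have hind := indep_b hΔ hbinj hbΔ
  obtain ⟨i, hi⟩ := hneg
  obtain ⟨k, hk⟩ := hpos
  rcases decomp' hΔ hbinj hbΔ hmem with ⟨c, hc, he⟩ | ⟨c, hc, he⟩
  · have := coeff_unique hind he.symm i
    have := hc i; linarith
  · have h0 : ∑ m, (g m + c m) • b m = 0 := by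
      have h1 : ∑ m, (g m + c m) • b m = ∑ m, g m • b m + ∑ m, c m • b m := by
        simp [add_smul, Finset.sum_add_distrib]
      rw [h1, he, neg_add_cancel]
    have := coeff_zero hind h0 k
    have := hc k; linarith

lemma sub_mem (hΦ : IsCrystRS Φ) {α β : V n} (hα : α ∈ Φ) (hβ : β ∈ Φ)
    (hpos : 0 < ⟪α, β⟫) (hcs : ⟪α, β⟫ * ⟪α, β⟫ < ⟪α, α⟫ * ⟪β, β⟫) : β - α ∈ Φ := by
  obtain ⟨p, hp⟩ := hΦ.cryst α hα β hβ
  obtain ⟨q, hq⟩ := hΦ.cryst β hβ α hα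
  have hαα : 0 < ⟪α, α⟫ := inner_self_pos' (hΦ.ne_zero α hα)
  have hββ : 0 < ⟪β, β⟫ := inner_self_pos' (hΦ.ne_zero β hβ)
  have hpv : ⟪β, covec α⟫ = 2 / ⟪α, α⟫ * ⟪α, β⟫ := by
    rw [inner_covec_right, real_inner_comm β α]
  have hqv : ⟪α, covec β⟫ = 2 / ⟪β, β⟫ * ⟪α, β⟫ := by
    rw [inner_covec_right]
  have hp' : (0:ℝ) < p := by
    rw [← hp, hpv]; positivity
  have hq' : (0:ℝ) < q := by
    rw [← hq, hqv]; positivity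
  have hpq : (p:ℝ) * q < 4 := by
    rw [← hp, ← hq, hpv, hqv]
    have h4 : (2 / ⟪α, α⟫ * ⟪α, β⟫) * (2 / ⟪β, β⟫ * ⟪α, β⟫)
        = 4 * (⟪α, β⟫ * ⟪α, β⟫) / (⟪α, α⟫ * ⟪β, β⟫) := by
      field_simp; ring
    rw [h4, div_lt_iff₀ (by positivity)]
    nlinarith
  have hp1 : 1 ≤ p := by exact_mod_cast hp'
  have hq1 : 1 ≤ q := by exact_mod_cast hq'
  have hpq4 : p * q < 4 := by exact_mod_cast hpq
  have hone : p = 1 ∨ q = 1 := by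
    by_contra hcon
    push_neg at hcon
    have : 2 ≤ p := by omega
    have : 2 ≤ q := by omega
    nlinarith
  rcases hone with h1 | h1
  · have := hΦ.refl_mem α hα β hβ
    rw [hp, h1] at this
    simpa using this
  · have := hΦ.refl_mem β hβ α hα
    rw [hq, h1] at this
    simp only [Int.cast_one, one_smul] at this
    have := hΦ.neg_mem _ this
    simpa using this

lemma single_sum (k : Fin N) (t : ℝ) :
    ∑ m, (if m = k then t else 0) • b m = t • b k := by
  simp [ite_smul]

lemma offdiag_nonpos (hΦ : IsCrystRS Φ) (hΔ : IsSimpleSys Φ Δ)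
    (hbinj : Function.Injective b) (hbΔ : Finset.image b Finset.univ = Δ)
    {i k : Fin N} (hik : i ≠ k) : ⟪b i, b k⟫ ≤ 0 := by
  classical
  have hind := indep_b hΔ hbinj hbΔ
  by_contra hcon
  push_neg at hcon
  have hii : 0 < ⟪b i, b i⟫ := inner_self_pos' (hΦ.ne_zero _ (b_mem_Φ hΔ hbΔ i))
  have hkk : 0 < ⟪b k, b k⟫ := inner_self_pos' (hΦ.ne_zero _ (b_mem_Φ hΔ hbΔ k))
  -- strict Cauchy-Schwarz from independence
  have hune : ⟪(b i), (b i)⟫ • b k - ⟪(b i), (b k)⟫ • b i ≠ 0 := by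
    intro h0
    have hsum : ∑ m, ((if m = k then ⟪(b i), (b i)⟫ else 0) + (if m = i then -⟪(b i), (b k)⟫ else 0)) • b m = 0 := by
      simp only [add_smul, Finset.sum_add_distrib, single_sum]
      rw [neg_smul]
      rw [sub_eq_zero] at h0
      rw [h0]; abel
    have := coeff_zero hind hsum k
    simp [hik.symm] at this
    exact (ne_of_gt hii) (by rw [this, inner_zero_left])
  have hcs : ⟪(b i), (b k)⟫ * ⟪(b i), (b k)⟫ < ⟪(b i), (b i)⟫ * ⟪(b k), (b k)⟫ := by
    have hq0 : 0 < ⟪⟪(b i), (b i)⟫ • b k - ⟪(b i), (b k)⟫ • b i, ⟪(b i), (b i)⟫ • b k - ⟪(b i), (b k)⟫ • b i⟫ := inner_self_pos' hune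
    have hexp : ⟪⟪(b i), (b i)⟫ • b k - ⟪(b i), (b k)⟫ • b i, ⟪(b i), (b i)⟫ • b k - ⟪(b i), (b k)⟫ • b i⟫
        = ⟪(b i), (b i)⟫ * (⟪(b i), (b i)⟫ * ⟪(b k), (b k)⟫ - ⟪(b i), (b k)⟫ * ⟪(b i), (b k)⟫) := by
      simp only [inner_sub_left, inner_sub_right, real_inner_smul_left, real_inner_smul_right,
        real_inner_comm (b k) (b i)]
      ring
    rw [hexp] at hq0
    nlinarith
  have hsub := sub_mem hΦ (b_mem_Φ hΔ hbΔ i) (b_mem_Φ hΔ hbΔ k) hcon hcs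
  have hrepr : b k - b i = ∑ m, ((if m = k then (1:ℝ) else 0) + (if m = i then -1 else 0)) • b m := by
    simp only [add_smul, Finset.sum_add_distrib, single_sum]
    rw [one_smul, neg_smul, one_smul]
    abel
  rw [hrepr] at hsub
  exact no_mixed hΔ hbinj hbΔ hsub ⟨i, by simp [hik, hik.symm]⟩ ⟨k, by simp [hik, hik.symm]⟩

lemma reduce (hΦ : IsCrystRS Φ) (hΔ : IsSimpleSys Φ Δ) (hbinj : Function.Injective b)
    (hbΔ : Finset.image b Finset.univ = Δ) (S : Finset (Fin N))
    (horth : ∀ i ∈ S, ∀ k, k ∉ S → ⟪b i, b k⟫ = 0) :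
    ∀ (M : ℕ) (c : Fin N → ℝ), (∀ i, 0 ≤ c i) → (∃ k, k ∉ S ∧ 0 < c k) →
      (∑ i, c i • b i) ∈ Φ → (∑ i ∈ S, c i ≤ (M : ℝ)) →
      (∑ i ∈ Finset.univ \ S, c i • b i) ∈ Φ := by
  classical
  have hind := indep_b hΔ hbinj hbΔ
  have base : ∀ (c : Fin N → ℝ), (∀ i, 0 ≤ c i) → (∀ i ∈ S, c i = 0) →
      (∑ i, c i • b i) ∈ Φ → (∑ i ∈ Finset.univ \ S, c i • b i) ∈ Φ := by
    intro c hc hz hmem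
    have hsplit : ∑ i ∈ Finset.univ \ S, c i • b i + ∑ i ∈ S, c i • b i = ∑ i, c i • b i :=
      Finset.sum_sdiff (Finset.subset_univ S)
    have hz' : ∑ i ∈ S, c i • b i = 0 :=
      Finset.sum_eq_zero (fun i hi => by rw [hz i hi, zero_smul])
    rw [hz', add_zero] at hsplit
    rw [hsplit]; exact hmem
  intro M
  induction M with
  | zero =>
    intro c hc hk hmem hsum
    refine base c hc (fun i hi => le_antisymm ?_ (hc i)) hmem
    calc c i ≤ ∑ m ∈ S, c m := Finset.single_le_sum (fun m _ => hc m) hi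
    _ ≤ 0 := by exact_mod_cast hsum
  | succ M IH =>
    intro c hc hk hmem hsum
    by_cases hall : ∀ i ∈ S, c i = 0
    · exact base c hc hall hmem
    push_neg at hall
    obtain ⟨k, hkS, hck⟩ := hk
    set w := ∑ i ∈ S, c i • b i with hw
    set v := ∑ i ∈ Finset.univ \ S, c i • b i with hv
    have hsplit : v + w = ∑ i, c i • b i := Finset.sum_sdiff (Finset.subset_univ S)
    have hwne : w ≠ 0 := by
      intro h0
      obtain ⟨i1, hi1, hci1⟩ := hall
      exact hci1 (coeff_zero_on hind h0 i1 hi1)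
    have hww : 0 < ⟪w, w⟫ := inner_self_pos' hwne
    have hwsum : ⟪w, w⟫ = ∑ i ∈ S, c i * ⟪b i, w⟫ := by
      rw [hw, sum_inner]
      exact Finset.sum_congr rfl (fun i _ => real_inner_smul_left _ _ _)
    -- find i0 ∈ S with c i0 > 0 and ⟪b i0, w⟫ > 0
    have hex : ∃ i0 ∈ S, 0 < c i0 * ⟪b i0, w⟫ := by
      by_contra hno
      push_neg at hno
      have : ⟪w, w⟫ ≤ 0 := hwsum ▸ Finset.sum_nonpos hno
      linarith
    obtain ⟨i0, hi0S, hprod⟩ := hex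
    have hbi0w : 0 < ⟪b i0, w⟫ := by
      rcases lt_or_ge 0 ⟪b i0, w⟫ with h | h
      · exact h
      · nlinarith [hc i0]
    have hbiv : ∀ i ∈ S, ⟪b i, v⟫ = 0 := by
      intro i hi
      rw [hv, inner_sum]
      refine Finset.sum_eq_zero (fun m hm => ?_)
      have hmS : m ∉ S := (Finset.mem_sdiff.1 hm).2
      rw [real_inner_smul_right, horth i hi m hmS, mul_zero]
    have hγ : ∑ i, c i • b i = v + w := hsplit.symm
    have hδγ : ⟪b i0, ∑ i, c i • b i⟫ = ⟪b i0, w⟫ := by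
      rw [hγ, inner_add_right, hbiv i0 hi0S, zero_add]
    have hvne : v ≠ 0 := by
      intro h0
      exact absurd (coeff_zero_on hind h0 k (Finset.mem_sdiff.2 ⟨Finset.mem_univ k, hkS⟩))
        (ne_of_gt hck)
    have hvv : 0 < ⟪v, v⟫ := inner_self_pos' hvne
    have hwv : ⟪w, v⟫ = 0 := by
      rw [hw, sum_inner]
      refine Finset.sum_eq_zero (fun i hi => ?_)
      rw [real_inner_smul_left, hbiv i hi, mul_zero]
    have hγγ : ⟪∑ i, c i • b i, ∑ i, c i • b i⟫ = ⟪w, w⟫ + ⟪v, v⟫ := by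
      rw [hγ, inner_add_left, inner_add_right, inner_add_right, hwv,
        real_inner_comm w v, hwv]
      ring
    have hδδ : 0 < ⟪b i0, b i0⟫ := inner_self_pos' (hΦ.ne_zero _ (b_mem_Φ hΔ hbΔ i0))
    have hcs : ⟪b i0, ∑ i, c i • b i⟫ * ⟪b i0, ∑ i, c i • b i⟫
        < ⟪b i0, b i0⟫ * ⟪∑ i, c i • b i, ∑ i, c i • b i⟫ := by
      rw [hδγ, hγγ]
      nlinarith [real_inner_mul_inner_self_le (b i0) w]
    have hpos : 0 < ⟪b i0, ∑ i, c i • b i⟫ := by rw [hδγ]; exact hbi0w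
    have hsubΦ := sub_mem hΦ (b_mem_Φ hΔ hbΔ i0) hmem hpos hcs
    set c' : Fin N → ℝ := fun m => c m - (if m = i0 then 1 else 0) with hc'
    have hrepr : ∑ i, c i • b i - b i0 = ∑ m, c' m • b m := by
      simp only [hc', sub_smul, Finset.sum_sub_distrib, single_sum, one_smul]
    rw [hrepr] at hsubΦ
    -- show c' nonneg via decomposition
    have hc'k : c' k = c k := by
      have : k ≠ i0 := fun h => hkS (h ▸ hi0S)
      simp [hc', this]
    have hc'nn : ∀ m, 0 ≤ c' m := by
      rcases decomp' hΔ hbinj hbΔ hsubΦ with ⟨e, he0, hee⟩ | ⟨e, he0, hee⟩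
      · intro m
        rw [coeff_unique hind hee m]
        exact he0 m
      · exfalso
        have h0 : ∑ m, (c' m + e m) • b m = 0 := by
          have h1 : ∑ m, (c' m + e m) • b m = ∑ m, c' m • b m + ∑ m, e m • b m := by
            simp [add_smul, Finset.sum_add_distrib]
          rw [h1, hee, neg_add_cancel]
        have := coeff_zero hind h0 k
        have := he0 k
        rw [hc'k] at *
        linarith
    have hsum' : ∑ i ∈ S, c' i ≤ (M : ℝ) := by
      have : ∑ i ∈ S, c' i = ∑ i ∈ S, c i - 1 := by
        simp only [hc', Finset.sum_sub_distrib, Finset.sum_ite_eq' S i0 (fun _ => (1:ℝ)), hi0S,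
          if_true]
      rw [this]
      push_cast at hsum ⊢
      linarith
    have hres := IH c' hc'nn ⟨k, hkS, hc'k ▸ hck⟩ hsubΦ hsum'
    have : ∑ i ∈ Finset.univ \ S, c' i • b i = ∑ i ∈ Finset.univ \ S, c i • b i := by
      refine Finset.sum_congr rfl (fun m hm => ?_)
      have hmS : m ∉ S := (Finset.mem_sdiff.1 hm).2
      have : m ≠ i0 := fun h => hmS (h ▸ hi0S)
      simp [hc', this]
    rw [this] at hres
    exact hres

lemma no_split (hΦ : IsCrystRS Φ) (hΔ : IsSimpleSys Φ Δ) (hbinj : Function.Injective b)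
    (hbΔ : Finset.image b Finset.univ = Δ) (S : Finset (Fin N))
    (hS : S.Nonempty) (hS' : ∃ k, k ∉ S)
    (horth : ∀ i ∈ S, ∀ k, k ∉ S → ⟪b i, b k⟫ = 0) : False := by
  classical
  have hind := indep_b hΔ hbinj hbΔ
  obtain ⟨i0, hi0⟩ := hS
  obtain ⟨k0, hk0⟩ := hS'
  set U : Submodule ℝ (V n) := Submodule.span ℝ ((S.image b : Finset (V n)) : Set (V n)) with hU
  set s : Set (V n) := (Φ : Set (V n)) ∩ (U : Set (V n)) with hs
  have hsub : s ⊆ (Φ : Set (V n)) := Set.inter_subset_left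
  have hbi0s : b i0 ∈ s := by
    refine ⟨by exact_mod_cast b_mem_Φ hΔ hbΔ i0, ?_⟩
    exact Submodule.subset_span (by exact_mod_cast Finset.mem_image_of_mem b hi0)
  -- b k0 is not in U
  have hbk0U : b k0 ∉ U := by
    intro hmem
    obtain ⟨f, -, hf⟩ := Submodule.mem_span_finset.1 hmem
    have hf' : ∑ i ∈ S, f (b i) • b i = b k0 := by
      rw [Finset.sum_image (fun x _ y _ h => hbinj h)] at hf
      exact hf
    have hsum0 : ∑ m, ((if m ∈ S then f (b m) else 0) - (if m = k0 then 1 else 0)) • b m = 0 := by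
      simp only [sub_smul, Finset.sum_sub_distrib, single_sum]
      rw [one_smul]
      have : ∑ m, (if m ∈ S then f (b m) else 0) • b m = ∑ m ∈ S, f (b m) • b m := by
        simp only [ite_smul, zero_smul, Finset.sum_ite_mem, Finset.univ_inter]
      rw [this, hf', sub_self]
    have := coeff_zero hind hsum0 k0
    simp [hk0] at this
  have hsne : s ≠ ∅ := fun h => by rw [h] at hbi0s; exact hbi0s
  have hsneΦ : s ≠ (Φ : Set (V n)) := by
    intro h
    have : b k0 ∈ s := by rw [h]; exact_mod_cast b_mem_Φ hΔ hbΔ k0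
    exact hbk0U this.2
  have hex : ∃ α ∈ s, ∃ β ∈ (Φ : Set (V n)) \ s, ⟪α, β⟫ ≠ 0 := by
    by_contra hno
    push_neg at hno
    rcases hΦ.irreducible s hsub (fun α hα β hβ => hno α hα β hβ) with h | h
    · exact hsne h
    · exact hsneΦ h
  obtain ⟨α, hαs, β, hβ, hαβ⟩ := hex
  have hβΦ : β ∈ Φ := hβ.1
  have hβU : β ∉ U := fun h => hβ.2 ⟨hβ.1, h⟩
  -- orthogonality of U against vectors orthogonal to all b i, i ∈ S
  have horthU : ∀ (y : V n), (∀ i ∈ S, ⟪b i, y⟫ = 0) → ∀ u ∈ U, ⟪u, y⟫ = 0 := by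
    intro y hy u hu
    induction hu using Submodule.span_induction with
    | mem x hx =>
      obtain ⟨i, hiS, hib⟩ := Finset.mem_image.1 (by exact_mod_cast hx)
      rw [← hib]; exact hy i hiS
    | zero => exact inner_zero_left y
    | add x z hx hz ihx ihz => rw [inner_add_left, ihx, ihz, add_zero]
    | smul a x hx ihx => rw [real_inner_smul_left, ihx, mul_zero]
  -- get a positive mixed root γ
  obtain ⟨c, hc, γmem, hγrep, hγα, hγU⟩ :
      ∃ c : Fin N → ℝ, (∀ i, 0 ≤ c i) ∧ (∑ i, c i • b i) ∈ Φ ∧ True ∧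
        ⟪α, ∑ i, c i • b i⟫ ≠ 0 ∧ (∑ i, c i • b i) ∉ U := by
    rcases decomp' hΔ hbinj hbΔ hβΦ with ⟨c, hc, he⟩ | ⟨c, hc, he⟩
    · exact ⟨c, hc, he ▸ hβΦ, trivial, he ▸ hαβ, he ▸ hβU⟩
    · refine ⟨c, hc, ?_, trivial, ?_, ?_⟩
      · have := hΦ.neg_mem β hβΦ
        rw [he, neg_neg] at this; exact this
      · have : β = -∑ i, c i • b i := he
        intro h0
        apply hαβ
        rw [this, inner_neg_right, h0, neg_zero]
      · intro h
        apply hβU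
        rw [he]
        exact U.neg_mem h
    
  set γ : V n := ∑ i, c i • b i with hγ
  set v : V n := ∑ i ∈ Finset.univ \ S, c i • b i with hv
  set w : V n := ∑ i ∈ S, c i • b i with hw
  have hsplit : v + w = γ := Finset.sum_sdiff (Finset.subset_univ S)
  -- witness outside S
  have hkw : ∃ k, k ∉ S ∧ 0 < c k := by
    by_contra hno
    push_neg at hno
    apply hγU
    have hz : ∀ k ∈ Finset.univ \ S, c k • b k = 0 := by
      intro m hm
      have hmS := (Finset.mem_sdiff.1 hm).2
      have hcm0 : c m = 0 := le_antisymm (hno m hmS) (hc m)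
      rw [hcm0, zero_smul]
    have hv0 : v = 0 := Finset.sum_eq_zero hz
    have hgw : γ = w := by rw [← hsplit, hv0, zero_add]
    rw [hgw, hw]
    exact Submodule.sum_mem _ (fun i hi =>
      Submodule.smul_mem _ _ (Submodule.subset_span (by exact_mod_cast Finset.mem_image_of_mem b hi)))
  -- v is a root, by the reduction lemma
  have hvΦ : v ∈ Φ :=
    reduce hΦ hΔ hbinj hbΔ S horth ⌈∑ i ∈ S, c i⌉₊ c hc hkw γmem (Nat.le_ceil _)
  have hbiv : ∀ i ∈ S, ⟪b i, v⟫ = 0 := by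
    intro i hi
    rw [hv, inner_sum]
    refine Finset.sum_eq_zero (fun m hm => ?_)
    rw [real_inner_smul_right, horth i hi m (Finset.mem_sdiff.1 hm).2, mul_zero]
  have hwv : ⟪w, v⟫ = 0 := by
    rw [hw, sum_inner]
    exact Finset.sum_eq_zero (fun i hi => by
      rw [real_inner_smul_left, hbiv i hi, mul_zero])
  -- w ≠ 0, so some coefficient in S is positive
  have hαv : ⟪α, v⟫ = 0 := horthU v hbiv α hαs.2
  have hαw : ⟪α, w⟫ ≠ 0 := by
    intro h
    apply hγα
    rw [← hsplit, inner_add_right, hαv, h, add_zero]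
  have hwne : w ≠ 0 := fun h => hαw (h ▸ inner_zero_right α)
  have hiw : ∃ i ∈ S, 0 < c i := by
    by_contra hno
    push_neg at hno
    apply hwne
    exact Finset.sum_eq_zero (fun i hi => by
      rw [le_antisymm (hno i hi) (hc i), zero_smul])
  obtain ⟨i1, hi1S, hci1⟩ := hiw
  obtain ⟨k1, hk1S, hck1⟩ := hkw
  -- reflection of γ in v gives w - v ∈ Φ
  have hvne : v ≠ 0 := hΦ.ne_zero v hvΦ
  have hvv : 0 < ⟪v, v⟫ := inner_self_pos' hvne
  have hγv : ⟪γ, covec v⟫ = 2 := by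
    rw [inner_covec_right]
    have : ⟪γ, v⟫ = ⟪v, v⟫ := by
      rw [← hsplit, inner_add_left, hwv, add_zero]
    rw [this]
    exact div_mul_cancel₀ 2 (ne_of_gt hvv)
  have hrefl := hΦ.refl_mem v hvΦ γ γmem
  rw [hγv] at hrefl
  have hwsubv : γ - (2:ℝ) • v = w - v := by
    rw [← hsplit, two_smul]
    abel
  rw [hwsubv] at hrefl
  -- w - v has mixed-sign coefficients: contradiction
  set g : Fin N → ℝ := fun m => if m ∈ S then c m else -c m with hg
  have hgrep : w - v = ∑ m, g m • b m := by
    have h1 : ∑ m, g m • b m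
        = ∑ m ∈ Finset.univ \ S, g m • b m + ∑ m ∈ S, g m • b m :=
      (Finset.sum_sdiff (Finset.subset_univ S)).symm
    have h2 : ∑ m ∈ S, g m • b m = w := by
      refine Finset.sum_congr rfl (fun m hm => ?_)
      simp [hg, hm]
    have h3 : ∑ m ∈ Finset.univ \ S, g m • b m = -v := by
      rw [hv, ← Finset.sum_neg_distrib]
      refine Finset.sum_congr rfl (fun m hm => ?_)
      have hmS := (Finset.mem_sdiff.1 hm).2
      simp [hg, hmS, neg_smul]
    rw [h1, h2, h3]
    abel
  rw [hgrep] at hrefl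
  exact no_mixed hΔ hbinj hbΔ hrefl
    ⟨k1, by simp [hg, hk1S]; linarith⟩
    ⟨i1, by simp [hg, hi1S]; linarith⟩

end Aux

open Aux

/-- all entries of the inverse of the Cartan matrix of an irreducible
crystallographic root system are nonnegative (indeed positive). -/
theorem inverse_cartan_pos {n N : ℕ} [DecidableEq (V n)] (Φ Δ : Finset (V n)) (hΦ : IsCrystRS Φ)
    (hΔ : IsSimpleSys Φ Δ) (b : Fin N → V n) (hbinj : Function.Injective b)
    (hbΔ : Finset.image b Finset.univ = Δ)
    (C : Matrix (Fin N) (Fin N) ℝ) (hC : ∀ i j, C i j = ⟪covec (b i), b j⟫)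
    (hdet : IsUnit C.det) :
    ∀ i j, 0 < C⁻¹ i j := by
  classical
  intro i j
  have hind := indep_b hΔ hbinj hbΔ
  have hmul : C * C⁻¹ = 1 := Matrix.mul_nonsing_inv C hdet
  set x : Fin N → ℝ := fun k => C⁻¹ k j with hxdef
  have hx : ∀ a, ∑ k, C a k * x k = if a = j then 1 else 0 := by
    intro a
    have h1 : (C * C⁻¹) a j = ∑ k, C a k * C⁻¹ k j := Matrix.mul_apply
    rw [hmul] at h1
    rw [← h1, Matrix.one_apply]
  have hB : ∀ a, 0 < ⟪b a, b a⟫ :=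
    fun a => inner_self_pos' (hΦ.ne_zero _ (b_mem_Φ hΔ hbΔ a))
  have hCd : ∀ a k, C a k = 2 / ⟪b a, b a⟫ * ⟪b a, b k⟫ := by
    intro a k; rw [hC, inner_covec_left]
  have hCdiag : ∀ a, C a a = 2 := by
    intro a
    rw [hCd]
    rw [div_mul_eq_mul_div, mul_div_assoc, div_self (ne_of_gt (hB a)), mul_one]
  have hCoff : ∀ a k, a ≠ k → C a k ≤ 0 := by
    intro a k hak
    rw [hCd]
    have h1 : 0 ≤ 2 / ⟪b a, b a⟫ := div_nonneg (by norm_num) (le_of_lt (hB a))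
    exact mul_nonpos_of_nonneg_of_nonpos h1 (offdiag_nonpos hΦ hΔ hbinj hbΔ hak)
  -- Step I : x is nonnegative
  have hxnn : ∀ k, 0 ≤ x k := by
    set y : Fin N → ℝ := fun k => max (-x k) 0 with hy
    set z : Fin N → ℝ := fun k => max (x k) 0 with hz
    have hy0 : ∀ k, 0 ≤ y k := fun k => le_max_right _ _
    have hz0 : ∀ k, 0 ≤ z k := fun k => le_max_right _ _
    have hxyz : ∀ k, x k = z k - y k := by
      intro k; rw [hy, hz]; simp [max_zero_sub_max_neg_zero_eq_self]
    have hyz0 : ∀ k, y k * z k = 0 := by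
      intro k
      rcases le_total (x k) 0 with h | h
      · have : z k = 0 := max_eq_right h
        rw [this, mul_zero]
      · have : y k = 0 := max_eq_right (by linarith)
        rw [this, zero_mul]
    -- Gram identity
    have hGx : ∀ a, ∑ k, ⟪b a, b k⟫ * x k = (⟪b a, b a⟫ / 2) * (if a = j then 1 else 0) := by
      intro a
      have h1 : ∀ k, ⟪b a, b k⟫ * x k = (⟪b a, b a⟫ / 2) * (C a k * x k) := by
        intro k
        have hA : ⟪b a, b a⟫ ≠ 0 := ne_of_gt (hB a)
        have hone : ⟪b a, b a⟫ / 2 * (2 / ⟪b a, b a⟫) = 1 := by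
          rw [div_mul_div_comm, mul_comm ⟪b a, b a⟫ 2]
          exact div_self (mul_ne_zero two_ne_zero hA)
        rw [hCd]
        calc ⟪b a, b k⟫ * x k
            = (⟪b a, b a⟫ / 2 * (2 / ⟪b a, b a⟫)) * (⟪b a, b k⟫ * x k) := by
              rw [hone, one_mul]
          _ = ⟪b a, b a⟫ / 2 * (2 / ⟪b a, b a⟫ * ⟪b a, b k⟫ * x k) := by ring
      calc ∑ k, ⟪b a, b k⟫ * x k = ∑ k, (⟪b a, b a⟫ / 2) * (C a k * x k) :=
            Finset.sum_congr rfl (fun k _ => h1 k)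
      _ = (⟪b a, b a⟫ / 2) * ∑ k, C a k * x k := (Finset.mul_sum _ _ _).symm
      _ = _ := by rw [hx a]
    set Q : ℝ := ∑ a, y a * (∑ k, ⟪b a, b k⟫ * x k) with hQ
    have hQ1 : 0 ≤ Q := by
      refine Finset.sum_nonneg (fun a _ => ?_)
      rw [hGx a]
      have : (0:ℝ) ≤ (if a = j then 1 else 0) := by split <;> norm_num
      have h2 : (0:ℝ) ≤ ⟪b a, b a⟫ / 2 := div_nonneg real_inner_self_nonneg (by norm_num)
      exact mul_nonneg (hy0 a) (mul_nonneg h2 this)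
    have hQ2 : Q = (∑ a, ∑ k, y a * (⟪b a, b k⟫ * z k)) - ∑ a, ∑ k, y a * (⟪b a, b k⟫ * y k) := by
      rw [hQ, ← Finset.sum_sub_distrib]
      refine Finset.sum_congr rfl (fun a _ => ?_)
      rw [Finset.mul_sum, ← Finset.sum_sub_distrib]
      refine Finset.sum_congr rfl (fun k _ => ?_)
      rw [hxyz k]; ring
    have hT1 : (∑ a, ∑ k, y a * (⟪b a, b k⟫ * z k)) ≤ 0 := by
      refine Finset.sum_nonpos (fun a _ => Finset.sum_nonpos (fun k _ => ?_))
      by_cases hak : a = k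
      · subst hak
        rw [show y a * (⟪b a, b a⟫ * z a) = (y a * z a) * ⟪b a, b a⟫ by ring, hyz0 a, zero_mul]
      · have h1 : ⟪b a, b k⟫ ≤ 0 := offdiag_nonpos hΦ hΔ hbinj hbΔ hak
        have := mul_nonneg (hy0 a) (hz0 k)
        nlinarith
    have hT2 : (∑ a, ∑ k, y a * (⟪b a, b k⟫ * y k)) = ⟪∑ m, y m • b m, ∑ m, y m • b m⟫ := by
      rw [sum_inner]
      refine Finset.sum_congr rfl (fun a _ => ?_)
      rw [real_inner_smul_left, inner_sum, Finset.mul_sum]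
      refine Finset.sum_congr rfl (fun k _ => ?_)
      rw [real_inner_smul_right]
      ring
    have hT2nn : 0 ≤ ∑ a, ∑ k, y a * (⟪b a, b k⟫ * y k) := by
      rw [hT2]; exact real_inner_self_nonneg
    have hY0 : ∑ m, y m • b m = 0 := by
      have h0 : ⟪∑ m, y m • b m, ∑ m, y m • b m⟫ = 0 := by
        rw [← hT2]; linarith
      exact inner_self_eq_zero.1 h0
    have hyzero := coeff_zero hind hY0
    intro k
    have hyk : max (-x k) 0 = 0 := hyzero k
    have h7 : -x k ≤ max (-x k) 0 := le_max_left _ _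
    rw [hyk] at h7
    linarith
  -- Step II : x j > 0
  have hxj : 0 < x j := by
    have h1 := hx j
    rw [if_pos rfl] at h1
    have h2 : ∑ k ∈ Finset.univ.erase j, C j k * x k + C j j * x j = 1 := by
      rw [Finset.sum_erase_add Finset.univ _ (Finset.mem_univ j)]
      exact h1
    have h3 : ∑ k ∈ Finset.univ.erase j, C j k * x k ≤ 0 := by
      refine Finset.sum_nonpos (fun k hk => ?_)
      have hkj : k ≠ j := Finset.ne_of_mem_erase hk
      exact mul_nonpos_of_nonpos_of_nonneg (hCoff j k (Ne.symm hkj)) (hxnn k)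
    rw [hCdiag j] at h2
    linarith
  -- Step III : strict positivity via connectivity
  by_contra hcon
  push_neg at hcon
  have hxi : x i = 0 := le_antisymm hcon (hxnn i)
  set S : Finset (Fin N) := Finset.univ.filter (fun k => x k = 0) with hS
  have hiS : i ∈ S := Finset.mem_filter.2 ⟨Finset.mem_univ i, hxi⟩
  have hjS : j ∉ S := by
    intro h
    have := (Finset.mem_filter.1 h).2
    linarith
  have horth : ∀ a ∈ S, ∀ k, k ∉ S → ⟪b a, b k⟫ = 0 := by
    intro a haS k hkS
    by_contra hG
    have hxa : x a = 0 := (Finset.mem_filter.1 haS).2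
    have haj : a ≠ j := by
      intro h; rw [h] at hxa; linarith
    have h1 := hx a
    rw [if_neg haj] at h1
    have h2 : ∑ m ∈ Finset.univ.erase a, C a m * x m + C a a * x a = 0 := by
      rw [Finset.sum_erase_add Finset.univ _ (Finset.mem_univ a)]
      exact h1
    rw [hxa, mul_zero, add_zero] at h2
    have h3 : ∀ m ∈ Finset.univ.erase a, C a m * x m ≤ 0 := fun m hm =>
      mul_nonpos_of_nonpos_of_nonneg (hCoff a m (Ne.symm (Finset.ne_of_mem_erase hm))) (hxnn m)
    have h4 : ∀ m ∈ Finset.univ.erase a, C a m * x m = 0 :=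
      (Finset.sum_eq_zero_iff_of_nonpos h3).1 h2
    have hka : k ≠ a := by
      intro h; rw [h] at hkS; exact hkS haS
    have h5 := h4 k (Finset.mem_erase.2 ⟨hka, Finset.mem_univ k⟩)
    have hCak : C a k ≠ 0 := by
      rw [hCd]
      exact mul_ne_zero (div_ne_zero (by norm_num) (ne_of_gt (hB a))) hG
    have hxk : x k = 0 := by
      rcases mul_eq_zero.1 h5 with h | h
      · exact absurd h hCak
      · exact h
    exact hkS (Finset.mem_filter.2 ⟨Finset.mem_univ k, hxk⟩)
  exact no_split hΦ hΔ hbinj hbΔ S ⟨i, hiS⟩ ⟨j, hjS⟩ horth
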